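/- If A[1 ← i] denotes the n×n matrix A with row 1 replaced by a copy of row i (for i ≥ 2), then perm(A[1 ← i]) = Σ_{j ≠ k} a_{ij} a_{ik} · perm(A with rows {1,i} and columns {j,k} deleted), where the sum is over ordered pairs of distinct column indices. -/

import Mathlib

/-- The permanent of a square matrix. -/
def Matrix.perm {n : ℕ} {R : Type*} [CommRing R] (A : Matrix (Fin n) (Fin n) R) : R :=
  ∑ σ : Equiv.Perm (Fin n), ∏ i, A i (σ i)

/-- The submatrix of `A` obtained by deleting the rows indexed by `s` and the columns
indexed by `t` (the remaining rows and columns are kept in increasing order); the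
result is a `k × k` matrix (junk value if the cardinalities do not match). -/
def Matrix.delSub {m k : ℕ} {R : Type*} [CommRing R] (A : Matrix (Fin m) (Fin m) R)
    (s t : Finset (Fin m)) : Matrix (Fin k) (Fin k) R :=
  if h : sᶜ.card = k ∧ tᶜ.card = k then
    A.submatrix (fun a => (sᶜ.orderIsoOfFin h.1 a : Fin m))
      (fun b => (tᶜ.orderIsoOfFin h.2 b : Fin m))
  else 0

open Finset
namespace PermAux

variable {n : ℕ}

/-- Equiv between two two-element subsets sending first to first, second to second. -/
def pairEquiv (a b c d : Fin (n + 2)) (hab : a ≠ b) (hcd : c ≠ d) :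
    {x : Fin (n + 2) // x ∈ ({a, b} : Finset (Fin (n + 2)))} ≃
      {x : Fin (n + 2) // x ∈ ({c, d} : Finset (Fin (n + 2)))} where
  toFun x := if (x : Fin (n + 2)) = a then ⟨c, by simp⟩ else ⟨d, by simp⟩
  invFun y := if (y : Fin (n + 2)) = c then ⟨a, by simp⟩ else ⟨b, by simp⟩
  left_inv := by
    rintro ⟨x, hx⟩
    simp only [mem_insert, mem_singleton] at hx
    rcases hx with rfl | rfl
    · simp
    · simp [Ne.symm hab, Ne.symm hcd]
  right_inv := by
    rintro ⟨y, hy⟩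
    simp only [mem_insert, mem_singleton] at hy
    rcases hy with rfl | rfl
    · simp
    · simp [Ne.symm hab, Ne.symm hcd]

@[simp] lemma pairEquiv_fst (a b c d : Fin (n + 2)) (hab : a ≠ b) (hcd : c ≠ d) (h) :
    (pairEquiv a b c d hab hcd ⟨a, h⟩ : Fin (n + 2)) = c := by simp [pairEquiv]

@[simp] lemma pairEquiv_snd (a b c d : Fin (n + 2)) (hab : a ≠ b) (hcd : c ≠ d) (h) :
    (pairEquiv a b c d hab hcd ⟨b, h⟩ : Fin (n + 2)) = d := by simp [pairEquiv, Ne.symm hab]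

end PermAux

namespace PermAux

variable {n : ℕ}

def complEquiv (s : Finset (Fin (n + 2))) (hs : sᶜ.card = n) :
    Fin n ≃ {x : Fin (n + 2) // ¬ x ∈ s} :=
  (sᶜ.orderIsoOfFin hs).toEquiv.trans (Equiv.subtypeEquivRight fun x => Finset.mem_compl)

@[simp] lemma complEquiv_coe (s : Finset (Fin (n + 2))) (hs : sᶜ.card = n) (m : Fin n) :
    ((complEquiv s hs m : {x : Fin (n + 2) // ¬ x ∈ s}) : Fin (n + 2)) =
      (sᶜ.orderIsoOfFin hs m : Fin (n + 2)) := rfl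

@[simp] lemma complEquiv_symm (s : Finset (Fin (n + 2))) (hs : sᶜ.card = n)
    (x : Fin (n + 2)) (hx : ¬ x ∈ s) :
    (complEquiv s hs).symm ⟨x, hx⟩ = (sᶜ.orderIsoOfFin hs).symm ⟨x, Finset.mem_compl.2 hx⟩ := rfl

def build (a b c d : Fin (n + 2)) (hab : a ≠ b) (hcd : c ≠ d)
    (hs : ({a, b} : Finset (Fin (n + 2)))ᶜ.card = n)
    (ht : ({c, d} : Finset (Fin (n + 2)))ᶜ.card = n)
    (τ : Equiv.Perm (Fin n)) : Equiv.Perm (Fin (n + 2)) :=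
  (Equiv.sumCompl (· ∈ ({a, b} : Finset (Fin (n + 2))))).symm.trans
    (((pairEquiv a b c d hab hcd).sumCongr
        ((complEquiv _ hs).symm.trans (τ.trans (complEquiv _ ht)))).trans
      (Equiv.sumCompl (· ∈ ({c, d} : Finset (Fin (n + 2))))))

variable {a b c d : Fin (n + 2)} {hab : a ≠ b} {hcd : c ≠ d}
    {hs : ({a, b} : Finset (Fin (n + 2)))ᶜ.card = n}
    {ht : ({c, d} : Finset (Fin (n + 2)))ᶜ.card = n} {τ : Equiv.Perm (Fin n)}

lemma build_fst : build a b c d hab hcd hs ht τ a = c := by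
  have ha : a ∈ ({a, b} : Finset (Fin (n + 2))) := by simp
  simp [build, Equiv.sumCompl_symm_apply_of_pos ha]

lemma build_snd : build a b c d hab hcd hs ht τ b = d := by
  have hb : b ∈ ({a, b} : Finset (Fin (n + 2))) := by simp
  simp [build, Equiv.sumCompl_symm_apply_of_pos hb, Ne.symm hab]

lemma build_compl (m : Fin n) :
    build a b c d hab hcd hs ht τ (complEquiv _ hs m : {x : Fin (n+2) // ¬ x ∈ ({a,b} : Finset _)}) =
      (complEquiv _ ht (τ m) : {x : Fin (n+2) // ¬ x ∈ ({c,d} : Finset _)}) := by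
  have hm := (complEquiv _ hs m).2
  have he : (⟨((complEquiv _ hs m : {x // ¬ x ∈ ({a, b} : Finset (Fin (n+2)))}) : Fin (n + 2)),
      hm⟩ : {x // ¬ x ∈ ({a, b} : Finset (Fin (n+2)))}) = complEquiv _ hs m := Subtype.ext rfl
  rw [build, Equiv.trans_apply, Equiv.sumCompl_symm_apply_of_neg hm, he]
  simp

end PermAux

namespace PermAux

variable {n : ℕ} {a b c d : Fin (n + 2)}

lemma card_compl_pair (hab : a ≠ b) : ({a, b} : Finset (Fin (n + 2)))ᶜ.card = n := by
  rw [Finset.card_compl, Finset.card_pair hab]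
  simp

lemma map_compl_mem (σ : Equiv.Perm (Fin (n + 2))) (h1 : σ a = c) (h2 : σ b = d)
    (x : Fin (n + 2)) (hx : ¬ x ∈ ({a, b} : Finset (Fin (n + 2)))) :
    ¬ σ x ∈ ({c, d} : Finset (Fin (n + 2))) := by
  simp only [mem_insert, mem_singleton, not_or] at hx ⊢
  exact ⟨fun h => hx.1 (σ.injective (h.trans h1.symm)),
    fun h => hx.2 (σ.injective (h.trans h2.symm))⟩

lemma map_compl_mem' (σ : Equiv.Perm (Fin (n + 2))) (h1 : σ a = c) (h2 : σ b = d)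
    (y : Fin (n + 2)) (hy : ¬ y ∈ ({c, d} : Finset (Fin (n + 2)))) :
    ¬ σ.symm y ∈ ({a, b} : Finset (Fin (n + 2))) := by
  simp only [mem_insert, mem_singleton, not_or] at hy ⊢
  constructor
  · intro h; apply hy.1; rw [← h1, ← h]; simp
  · intro h; apply hy.2; rw [← h2, ← h]; simp

def invBuild (hs : ({a, b} : Finset (Fin (n + 2)))ᶜ.card = n)
    (ht : ({c, d} : Finset (Fin (n + 2)))ᶜ.card = n)
    (σ : Equiv.Perm (Fin (n + 2))) (h1 : σ a = c) (h2 : σ b = d) :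
    Equiv.Perm (Fin n) where
  toFun m := (complEquiv _ ht).symm
    ⟨σ (complEquiv _ hs m), map_compl_mem σ h1 h2 _ (complEquiv _ hs m).2⟩
  invFun m := (complEquiv _ hs).symm
    ⟨σ.symm (complEquiv _ ht m), map_compl_mem' σ h1 h2 _ (complEquiv _ ht m).2⟩
  left_inv m := by
    apply (complEquiv _ hs).injective
    rw [Equiv.apply_symm_apply]
    apply Subtype.ext
    show (σ.symm _ : Fin (n + 2)) = _
    rw [Equiv.apply_symm_apply, Equiv.symm_apply_apply]
  right_inv m := by
    apply (complEquiv _ ht).injective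
    rw [Equiv.apply_symm_apply]
    apply Subtype.ext
    show (σ _ : Fin (n + 2)) = _
    rw [Equiv.apply_symm_apply, Equiv.apply_symm_apply]

end PermAux

namespace PermAux

variable {n : ℕ} {a b c d : Fin (n + 2)} {hab : a ≠ b} {hcd : c ≠ d}
    {hs : ({a, b} : Finset (Fin (n + 2)))ᶜ.card = n}
    {ht : ({c, d} : Finset (Fin (n + 2)))ᶜ.card = n}

lemma invBuild_build (τ : Equiv.Perm (Fin n)) :
    invBuild hs ht (build a b c d hab hcd hs ht τ) build_fst build_snd = τ := by
  apply Equiv.ext; intro m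
  apply (complEquiv _ ht).injective
  apply Subtype.ext
  show ((complEquiv _ ht) ((complEquiv _ ht).symm _) : Fin (n + 2)) = _
  rw [Equiv.apply_symm_apply]
  exact build_compl m

lemma build_invBuild (σ : Equiv.Perm (Fin (n + 2))) (h1 : σ a = c) (h2 : σ b = d) :
    build a b c d hab hcd hs ht (invBuild hs ht σ h1 h2) = σ := by
  apply Equiv.ext; intro x
  by_cases hx : x ∈ ({a, b} : Finset (Fin (n + 2)))
  · simp only [mem_insert, mem_singleton] at hx
    rcases hx with rfl | rfl
    · rw [build_fst, h1]
    · rw [build_snd, h2]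
  · set m := (complEquiv _ hs).symm ⟨x, hx⟩ with hm
    have hxm : x = ((complEquiv _ hs m : {y // ¬ y ∈ ({a, b} : Finset (Fin (n+2)))}) : Fin (n + 2)) := by
      rw [hm, Equiv.apply_symm_apply]
    rw [hxm, build_compl]
    show ((complEquiv _ ht) ((complEquiv _ ht).symm _) : Fin (n + 2)) = _
    rw [Equiv.apply_symm_apply]

end PermAux

namespace PermAux

variable {n : ℕ} {R : Type*} [CommRing R] {a b c d : Fin (n + 2)} {hab : a ≠ b} {hcd : c ≠ d}
    {hs : ({a, b} : Finset (Fin (n + 2)))ᶜ.card = n}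
    {ht : ({c, d} : Finset (Fin (n + 2)))ᶜ.card = n}

lemma prod_build (f : Fin (n + 2) → Fin (n + 2) → R) (τ : Equiv.Perm (Fin n)) :
    ∏ r, f r (build a b c d hab hcd hs ht τ r) =
      f a c * f b d *
        ∏ m, f ((complEquiv _ hs m : {y // ¬ y ∈ ({a, b} : Finset (Fin (n+2)))}) : Fin (n + 2))
          ((complEquiv _ ht (τ m) : {y // ¬ y ∈ ({c, d} : Finset (Fin (n+2)))}) : Fin (n + 2)) := by
  rw [← Equiv.prod_comp (Equiv.sumCompl (· ∈ ({a, b} : Finset (Fin (n + 2)))))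
    (fun r => f r (build a b c d hab hcd hs ht τ r)), Fintype.prod_sum_type]
  congr 1
  · have : ∀ x : {x // x ∈ ({a, b} : Finset (Fin (n + 2)))},
        f x (build a b c d hab hcd hs ht τ x) =
          (fun y => f y (build a b c d hab hcd hs ht τ y)) (x : Fin (n + 2)) := fun _ => rfl
    simp only [Equiv.sumCompl_apply_inl]
    rw [Finset.prod_coe_sort ({a, b} : Finset (Fin (n + 2)))
      (fun y => f y (build a b c d hab hcd hs ht τ y)), Finset.prod_pair hab,
      build_fst, build_snd]
  · simp only [Equiv.sumCompl_apply_inr]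
    rw [← Equiv.prod_comp (complEquiv _ hs)
      (fun x : {x // ¬ x ∈ ({a, b} : Finset (Fin (n + 2)))} =>
        f x (build a b c d hab hcd hs ht τ x))]
    exact Finset.prod_congr rfl fun m _ => by rw [build_compl]

end PermAux

namespace PermAux

variable {n : ℕ} {R : Type*} [CommRing R]

lemma fiber_sum (A : Matrix (Fin (n + 2)) (Fin (n + 2)) R) (i j k : Fin (n + 2))
    (hi : i ≠ 0) (hjk : j ≠ k) :
    ∑ σ ∈ Finset.univ.filter (fun σ : Equiv.Perm (Fin (n + 2)) => σ 0 = j ∧ σ i = k),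
        ∏ r, (A.updateRow 0 (A i)) r (σ r) =
      A i j * A i k * (Matrix.delSub (k := n) A {0, i} {j, k}).perm := by
  have h0i : (0 : Fin (n + 2)) ≠ i := Ne.symm hi
  have hs : ({0, i} : Finset (Fin (n + 2)))ᶜ.card = n := card_compl_pair h0i
  have ht : ({j, k} : Finset (Fin (n + 2)))ᶜ.card = n := card_compl_pair hjk
  rw [Matrix.perm, Finset.mul_sum]
  refine Finset.sum_bij'
    (fun σ hσ => invBuild hs ht σ (Finset.mem_filter.1 hσ).2.1 (Finset.mem_filter.1 hσ).2.2)
    (fun τ _ => build 0 i j k h0i hjk hs ht τ) (fun _ _ => Finset.mem_univ _) ?_ ?_ ?_ ?_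
  · intro τ _
    exact Finset.mem_filter.2 ⟨Finset.mem_univ _, build_fst, build_snd⟩
  · intro σ hσ
    exact build_invBuild σ _ _
  · intro τ _
    exact invBuild_build τ
  · intro σ hσ
    obtain ⟨-, h1, h2⟩ := Finset.mem_filter.1 hσ
    set τ := invBuild hs ht σ h1 h2 with hτ
    have hσ' : σ = build 0 i j k h0i hjk hs ht τ := (build_invBuild σ h1 h2).symm
    conv_lhs => rw [hσ', prod_build (f := A.updateRow 0 (A i))]
    rw [Matrix.updateRow_self, Matrix.updateRow_ne hi]
    congr 1
    refine Finset.prod_congr rfl fun m _ => ?_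
    have hne : ((complEquiv _ hs m : {y // ¬ y ∈ ({0, i} : Finset (Fin (n+2)))}) : Fin (n+2)) ≠ 0 := by
      intro h
      apply (complEquiv _ hs m).2
      rw [h]
      simp
    rw [Matrix.updateRow_ne hne, Matrix.delSub, dif_pos ⟨hs, ht⟩, Matrix.submatrix_apply]
    rfl

end PermAux


/-- Expanding `perm (A[1 ← i])` (row `1` replaced by a copy of row `i`, `i ≠ 1`;
here rows are indexed from `0`) along the two equal rows:
`perm (A[1 ← i]) = Σ_{j ≠ k} a_{ij} a_{ik} · perm (A with rows {1,i} and columns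
{j,k} deleted)`, the sum being over ordered pairs of distinct column indices. -/
theorem perm_updateRow_copy_expand {n : ℕ} {R : Type*} [CommRing R]
    (A : Matrix (Fin (n + 2)) (Fin (n + 2)) R) (i : Fin (n + 2)) (hi : i ≠ 0) :
    (A.updateRow 0 (A i)).perm =
      ∑ j, ∑ k ∈ Finset.univ \ {j},
        A i j * A i k * (Matrix.delSub (k := n) A {0, i} {j, k}).perm := by
  classical
  have step1 : ∑ j, ∑ k ∈ Finset.univ \ {j},
      A i j * A i k * (Matrix.delSub (k := n) A {0, i} {j, k}).perm =
      ∑ j, ∑ σ : Equiv.Perm (Fin (n + 2)), ∑ k ∈ Finset.univ \ {j},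
        if σ 0 = j ∧ σ i = k then ∏ r, (A.updateRow 0 (A i)) r (σ r) else 0 := by
    refine Finset.sum_congr rfl fun j _ => ?_
    rw [← Finset.sum_comm]
    refine Finset.sum_congr rfl fun k hk => ?_
    have hjk : j ≠ k := by
      rw [Finset.mem_sdiff, Finset.mem_singleton] at hk
      exact Ne.symm hk.2
    rw [← Finset.sum_filter]
    exact (PermAux.fiber_sum A i j k hi hjk).symm
  rw [step1, Finset.sum_comm, Matrix.perm]
  refine Finset.sum_congr rfl fun σ _ => ?_
  rw [Finset.sum_eq_single (σ 0)]
  · rw [Finset.sum_eq_single (σ i)]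
    · simp
    · intro k _ hk
      simp [Ne.symm hk]
    · intro h
      exact absurd (Finset.mem_sdiff.2 ⟨Finset.mem_univ _,
        Finset.notMem_singleton.2 (fun h' => hi (σ.injective h'))⟩) h
  · intro j _ hj
    apply Finset.sum_eq_zero
    intro k _
    simp [Ne.symm hj]
  · simp
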